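/- Let θ₀ ∈ (0,π), let w ∈ ℝ² be a unit vector, and let γ:[0,ℓ]→ℝ² be a C¹ curve parametrized by arclength such that for every t the angle between the line ℝ·γ̇(t) and the line ℝ·w is at most (π−θ₀)/2. If the image of γ is contained in a closed ball of radius R, then ℓ ≤ 2R/sin(θ₀/2). -/

import Mathlib

open Set Metric

/-- The angle in `[0, π/2]` between the lines spanned by two nonzero vectors of the
Euclidean plane. -/
noncomputable def lineAngle (u v : EuclideanSpace ℝ (Fin 2)) : ℝ :=
  Real.arccos (|(inner ℝ u v : ℝ)| / (‖u‖ * ‖v‖))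

/-- Let `θ₀ ∈ (0,π)`, let `w` be a unit vector of the plane, and let
`γ : [0,ℓ] → ℝ²` be a `C¹` curve parametrized by arclength such that for every `t` the angle
between the tangent line `ℝ·γ̇(t)` and the line `ℝ·w` is at most `(π−θ₀)/2`.  If the image of
`γ` is contained in a closed ball of radius `R`, then `ℓ ≤ 2R/sin(θ₀/2)`. -/
theorem length_bound_of_cone_tangency
    (θ₀ : ℝ) (hθ₀ : 0 < θ₀) (hθ₀' : θ₀ < Real.pi)
    (w : EuclideanSpace ℝ (Fin 2)) (hw : ‖w‖ = 1)
    (ℓ : ℝ) (hℓ : 0 ≤ ℓ) (γ γ' : ℝ → EuclideanSpace ℝ (Fin 2))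
    (hγ' : ∀ t ∈ Icc 0 ℓ, HasDerivAt γ (γ' t) t)
    (harc : ∀ t ∈ Icc 0 ℓ, ‖γ' t‖ = 1)
    (hangle : ∀ t ∈ Icc 0 ℓ, lineAngle (γ' t) w ≤ (Real.pi - θ₀) / 2)
    (c : EuclideanSpace ℝ (Fin 2)) (R : ℝ)
    (himg : ∀ t ∈ Icc 0 ℓ, γ t ∈ closedBall c R) :
    ℓ ≤ 2 * R / Real.sin (θ₀ / 2) := by
  have hpi := Real.pi_pos
  set s := Real.sin (θ₀ / 2) with hsdef
  have hs : 0 < s := Real.sin_pos_of_pos_of_lt_pi (by linarith) (by linarith)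
  have h0mem : (0 : ℝ) ∈ Icc 0 ℓ := ⟨le_refl 0, hℓ⟩
  have hlmem : ℓ ∈ Icc 0 ℓ := ⟨hℓ, le_refl ℓ⟩
  have hR : 0 ≤ R := le_trans dist_nonneg (mem_closedBall.1 (himg 0 h0mem))
  -- the scalar function g t = ⟪w, γ t⟫
  set g : ℝ → ℝ := fun t => (inner ℝ w (γ t) : ℝ) with hgdef
  set g' : ℝ → ℝ := fun t => (inner ℝ w (γ' t) : ℝ) with hg'def
  have hg : ∀ t ∈ Icc 0 ℓ, HasDerivAt g (g' t) t := by
    intro t ht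
    have := (hasDerivAt_const t w).inner ℝ (hγ' t ht)
    simpa only [inner_zero_left, add_zero] using this
  -- lower bound on |g'|
  have hlow : ∀ t ∈ Icc 0 ℓ, s ≤ |g' t| := by
    intro t ht
    have hub : |(inner ℝ (γ' t) w : ℝ)| ≤ 1 := by
      calc |(inner ℝ (γ' t) w : ℝ)| ≤ ‖γ' t‖ * ‖w‖ := abs_real_inner_le_norm _ _
        _ = 1 := by rw [harc t ht, hw, one_mul]
    have hla : Real.arccos (|(inner ℝ (γ' t) w : ℝ)|) ≤ (Real.pi - θ₀) / 2 := by
      have := hangle t ht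
      unfold lineAngle at this
      rwa [harc t ht, hw, one_mul, div_one] at this
    have hcos : Real.cos ((Real.pi - θ₀) / 2) ≤
        Real.cos (Real.arccos (|(inner ℝ (γ' t) w : ℝ)|)) :=
      Real.cos_le_cos_of_nonneg_of_le_pi (Real.arccos_nonneg _) (by linarith) hla
    rw [Real.cos_arccos (by linarith [abs_nonneg (inner ℝ (γ' t) w : ℝ)]) hub] at hcos
    have hcs : Real.cos ((Real.pi - θ₀) / 2) = s := by
      rw [show (Real.pi - θ₀) / 2 = Real.pi / 2 - θ₀ / 2 by ring, Real.cos_pi_div_two_sub]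
    rw [hcs] at hcos
    calc s ≤ |(inner ℝ (γ' t) w : ℝ)| := hcos
      _ = |g' t| := by rw [real_inner_comm]
  -- key bound: s * ℓ ≤ |g ℓ - g 0|
  have hne : ∀ t ∈ Icc 0 ℓ, g' t ≠ 0 := by
    intro t ht h
    have := hlow t ht
    rw [h, abs_zero] at this
    linarith
  have hgw : ∀ t ∈ Icc 0 ℓ, HasDerivWithinAt g (g' t) (Icc 0 ℓ) t :=
    fun t ht => (hg t ht).hasDerivWithinAt
  have hcont : ContinuousOn g (Icc 0 ℓ) :=
    fun t ht => (hg t ht).continuousAt.continuousWithinAt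
  have hdiff : DifferentiableOn ℝ g (interior (Icc 0 ℓ)) := by
    rw [interior_Icc]
    exact fun t ht => ((hg t (Ioo_subset_Icc_self ht)).differentiableAt).differentiableWithinAt
  have hderiv : ∀ t ∈ interior (Icc 0 ℓ), deriv g t = g' t := by
    rw [interior_Icc]
    exact fun t ht => (hg t (Ioo_subset_Icc_self ht)).deriv
  have key : s * ℓ ≤ |g ℓ - g 0| := by
    rcases hasDerivWithinAt_forall_lt_or_forall_gt_of_forall_ne (convex_Icc 0 ℓ) hgw hne with
      hneg | hpos
    · -- g' < 0 everywhere, so deriv ≤ -s on interior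
      have hle : ∀ t ∈ interior (Icc 0 ℓ), deriv g t ≤ -s := by
        intro t ht
        rw [hderiv t ht]
        have h1 := hlow t (interior_subset ht)
        have h2 := hneg t (interior_subset ht)
        rw [abs_of_neg h2] at h1
        linarith
      have := (convex_Icc 0 ℓ).image_sub_le_mul_sub_of_deriv_le hcont hdiff hle 0 h0mem ℓ hlmem hℓ
      have h3 : s * ℓ ≤ g 0 - g ℓ := by nlinarith
      calc s * ℓ ≤ g 0 - g ℓ := h3
        _ ≤ |g 0 - g ℓ| := le_abs_self _
        _ = |g ℓ - g 0| := abs_sub_comm _ _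
    · -- g' > 0 everywhere, so s ≤ deriv on interior
      have hle : ∀ t ∈ interior (Icc 0 ℓ), s ≤ deriv g t := by
        intro t ht
        rw [hderiv t ht]
        have h1 := hlow t (interior_subset ht)
        have h2 := hpos t (interior_subset ht)
        rw [abs_of_pos h2] at h1
        linarith
      have := (convex_Icc 0 ℓ).mul_sub_le_image_sub_of_le_deriv hcont hdiff hle 0 h0mem ℓ hlmem hℓ
      calc s * ℓ = s * (ℓ - 0) := by ring
        _ ≤ g ℓ - g 0 := this
        _ ≤ |g ℓ - g 0| := le_abs_self _
  -- upper bound: |g ℓ - g 0| ≤ 2R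
  have hub2 : |g ℓ - g 0| ≤ 2 * R := by
    have h1 : g ℓ - g 0 = (inner ℝ w (γ ℓ - γ 0) : ℝ) := by
      simp [hgdef, inner_sub_right]
    rw [h1]
    calc |(inner ℝ w (γ ℓ - γ 0) : ℝ)| ≤ ‖w‖ * ‖γ ℓ - γ 0‖ := abs_real_inner_le_norm _ _
      _ = ‖γ ℓ - γ 0‖ := by rw [hw, one_mul]
      _ = dist (γ ℓ) (γ 0) := (dist_eq_norm _ _).symm
      _ ≤ dist (γ ℓ) c + dist c (γ 0) := dist_triangle _ _ _
      _ ≤ R + R := add_le_add (mem_closedBall.1 (himg ℓ hlmem))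
            (by rw [dist_comm]; exact mem_closedBall.1 (himg 0 h0mem))
      _ = 2 * R := by ring
  rw [le_div_iff₀ hs]
  linarith
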